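/- Combined conic constraint guarantee (end of Section IV-D): Let x be a random vector in ℝ^n with finite second moments, mean x̄ and covariance Σ. Let A be an n×n real matrix with rows a₁ᵀ, …, a_nᵀ, let b ∈ ℝ^n with entries b₁, …, b_n, c ∈ ℝ^n, d ∈ ℝ, and δ ∈ (0, 1]. Suppose there exist f₁, …, f_n ≥ 0, β₁, …, β_n ≥ 0 with Σᵢ βᵢ = 1, and ε¹ᵢ, ε²ᵢ ∈ (0,1) with ε¹ᵢ + ε²ᵢ ≥ 2 − βᵢδ for each i, such that: (a) Σᵢ fᵢ² ≤ (cᵀx̄ + d)², with cᵀx̄ + d ≥ 0; (b) aᵢᵀx̄ + 𝒬(ε¹ᵢ)·√(aᵢᵀΣaᵢ) ≤ fᵢ − bᵢ for each i; and (c) −aᵢᵀx̄ + 𝒬(ε²ᵢ)·√(aᵢᵀΣaᵢ) ≤ fᵢ + bᵢ for each i. Then P(‖Ax + b‖₂ ≤ cᵀx̄ + d) ≥ 1 − δ, and this holds for every distribution of x in the moment-based ambiguity set 𝒫(x̄, Σ). -/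

import Mathlib

open MeasureTheory

/-- Euclidean norm of a vector in `ℝ^n`. -/
noncomputable def euclNorm {n : ℕ} (v : Fin n → ℝ) : ℝ :=
  Real.sqrt (∑ i, v i ^ 2)

/-- The DR quantile function `𝒬(α) = √(α/(1-α))`. -/
noncomputable def drQ (α : ℝ) : ℝ := Real.sqrt (α / (1 - α))

lemma memL2_mul_integrable {Ω : Type*} [MeasurableSpace Ω] {P : Measure Ω}
    {f g : Ω → ℝ} (hf : MemLp f 2 P) (hg : MemLp g 2 P) :
    Integrable (fun ω => f ω * g ω) P := by
  have h := ((hf.add hg).integrable_sq.sub hf.integrable_sq).sub hg.integrable_sq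
  have h2 : Integrable (fun ω => 2 * (f ω * g ω)) P := by
    apply h.congr
    filter_upwards with ω
    simp [Pi.sub_apply, Pi.add_apply]; ring
  have := h2.const_mul (1/2 : ℝ)
  apply this.congr
  filter_upwards with ω
  ring


lemma cantelli {Ω : Type*} [MeasurableSpace Ω] (P : Measure Ω) [IsProbabilityMeasure P]
    {y : Ω → ℝ} (hy : MemLp y 2 P) {m v t : ℝ}
    (hm : ∫ ω, y ω ∂P = m) (hv : ∫ ω, (y ω - m) ^ 2 ∂P = v) (ht : 0 < t) :
    P {ω | m + t ≤ y ω} ≤ ENNReal.ofReal (v / (v + t ^ 2)) := by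
  have hvnn : 0 ≤ v := hv ▸ integral_nonneg fun ω => sq_nonneg _
  set u : ℝ := v / t with hu
  have hunn : 0 ≤ u := div_nonneg hvnn ht.le
  have hz : MemLp (fun ω => y ω - m + u) 2 P := (hy.sub (memLp_const m)).add (memLp_const u)
  have hg : Integrable (fun ω => (y ω - m + u) ^ 2) P := hz.integrable_sq
  have hyint : Integrable y P := hy.integrable one_le_two
  have hsq : Integrable (fun ω => (y ω - m) ^ 2) P := by
    have := (hy.sub (memLp_const m)).integrable_sq
    apply this.congr
    filter_upwards with ω
    simp [Pi.sub_apply]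
  have hint : ∫ ω, (y ω - m + u) ^ 2 ∂P = v + u ^ 2 := by
    have e : ∀ ω, (y ω - m + u) ^ 2 = (y ω - m) ^ 2 + (2 * u) * y ω + (u ^ 2 - 2 * u * m) := by
      intro ω; ring
    simp only [e]
    have h2 : Integrable (fun ω => 2 * u * y ω) P := hyint.const_mul (2 * u)
    have h12 : Integrable (fun ω => (y ω - m) ^ 2 + 2 * u * y ω) P := hsq.add h2
    rw [integral_add h12 (integrable_const _), integral_add hsq h2,
      MeasureTheory.integral_const_mul, hm, hv, integral_const]
    simp
  have hmarkov := mul_meas_ge_le_integral_of_nonneg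
    (Filter.Eventually.of_forall fun ω => sq_nonneg (y ω - m + u)) hg ((t + u) ^ 2)
  have hsub : {ω | m + t ≤ y ω} ⊆ {ω | (t + u) ^ 2 ≤ (y ω - m + u) ^ 2} := by
    intro ω hω
    have h1 : t + u ≤ y ω - m + u := by simp only [Set.mem_setOf_eq] at hω; linarith
    exact pow_le_pow_left₀ (by positivity) h1 2
  have htu : 0 < (t + u) ^ 2 := by positivity
  have hfin : P {ω | (t + u) ^ 2 ≤ (y ω - m + u) ^ 2} ≠ ⊤ := measure_ne_top _ _
  have hkey : (P {ω | m + t ≤ y ω}).toReal ≤ (v + u ^ 2) / (t + u) ^ 2 := by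
    rw [le_div_iff₀ htu]
    calc (P {ω | m + t ≤ y ω}).toReal * (t + u) ^ 2
        ≤ (P {ω | (t + u) ^ 2 ≤ (y ω - m + u) ^ 2}).toReal * (t + u) ^ 2 := by
          apply mul_le_mul_of_nonneg_right _ htu.le
          exact ENNReal.toReal_mono hfin (measure_mono hsub)
      _ ≤ v + u ^ 2 := by rw [mul_comm]; rw [hint] at hmarkov; exact hmarkov
  have hratio : (v + u ^ 2) / (t + u) ^ 2 = v / (v + t ^ 2) := by
    rcases eq_or_lt_of_le hvnn with hv0 | hv0
    · simp [hu, ← hv0]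
    · have ht' : (t : ℝ) ≠ 0 := ht.ne'
      have : v + t ^ 2 ≠ 0 := by positivity
      have hut : u * t = v := by rw [hu, div_mul_cancel₀ v ht']
      field_simp [hu]
      linear_combination (u * t - v) * hut
  rw [← hratio]
  calc P {ω | m + t ≤ y ω} = ENNReal.ofReal (P {ω | m + t ≤ y ω}).toReal := by
        rw [ENNReal.ofReal_toReal (measure_ne_top _ _)]
    _ ≤ ENNReal.ofReal ((v + u ^ 2) / (t + u) ^ 2) := ENNReal.ofReal_le_ofReal hkey

lemma cantelli_drQ {Ω : Type*} [MeasurableSpace Ω] (P : Measure Ω) [IsProbabilityMeasure P]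
    {y : Ω → ℝ} (hy : MemLp y 2 P) {m v F ε : ℝ}
    (hm : ∫ ω, y ω ∂P = m) (hv : ∫ ω, (y ω - m) ^ 2 ∂P = v)
    (hε : ε ∈ Set.Ioo (0 : ℝ) 1) (hle : m + drQ ε * Real.sqrt v ≤ F) :
    P {ω | F < y ω} ≤ ENNReal.ofReal (1 - ε) := by
  have hvnn : 0 ≤ v := hv ▸ integral_nonneg fun ω => sq_nonneg _
  rcases eq_or_lt_of_le hvnn with hv0 | hv0
  · -- variance zero: y = m a.e.
    have hsq : Integrable (fun ω => (y ω - m) ^ 2) P := by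
      have := (hy.sub (memLp_const m)).integrable_sq
      apply this.congr; filter_upwards with ω; simp [Pi.sub_apply]
    have h0 : (fun ω => (y ω - m) ^ 2) =ᵐ[P] 0 := by
      rw [← integral_eq_zero_iff_of_nonneg (fun ω => sq_nonneg _) hsq, hv, ← hv0]
    have hym : ∀ᵐ ω ∂P, y ω = m := by
      filter_upwards [h0] with ω hω
      have : (y ω - m) ^ 2 = 0 := hω
      have := pow_eq_zero_iff (n := 2) (by norm_num) |>.mp this
      linarith [sub_eq_zero.mp this]
    have hmF : m ≤ F := by
      have : Real.sqrt v = 0 := by rw [← hv0]; exact Real.sqrt_zero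
      rw [this, mul_zero, add_zero] at hle; exact hle
    have : P {ω | F < y ω} = 0 := by
      apply measure_mono_null _ (ae_iff.mp hym)
      intro ω hω h'
      simp only [Set.mem_setOf_eq] at hω
      rw [h'] at hω; linarith
    rw [this]; exact zero_le
  · set t : ℝ := drQ ε * Real.sqrt v with hT
    have hqpos : 0 < drQ ε := by
      apply Real.sqrt_pos.mpr
      exact div_pos hε.1 (by linarith [hε.2])
    have htpos : 0 < t := mul_pos hqpos (Real.sqrt_pos.mpr hv0)
    have hcant := cantelli P hy hm hv htpos
    have hsub : {ω | F < y ω} ⊆ {ω | m + t ≤ y ω} := by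
      intro ω hω
      simp only [Set.mem_setOf_eq] at hω ⊢
      linarith
    have ht2 : t ^ 2 = (ε / (1 - ε)) * v := by
      rw [hT, mul_pow, Real.sq_sqrt hvnn, drQ, Real.sq_sqrt]
      exact div_nonneg hε.1.le (by linarith [hε.2])
    have hratio : v / (v + t ^ 2) = 1 - ε := by
      have h1 : (1 : ℝ) - ε ≠ 0 := by intro h; have := hε.2; linarith [sub_eq_zero.mp h]
      have h2 : v + t ^ 2 ≠ 0 := by positivity
      rw [div_eq_iff h2, ht2]
      field_simp
      ring
    calc P {ω | F < y ω} ≤ P {ω | m + t ≤ y ω} := measure_mono hsub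
      _ ≤ ENNReal.ofReal (v / (v + t ^ 2)) := hcant
      _ = ENNReal.ofReal (1 - ε) := by rw [hratio]

/-- Combined conic constraint guarantee (end of Section IV-D): the convex DR SOC
tightenings (b), (c) together with the norm budget (a) imply the relaxed DR conic risk
constraint `P(‖Ax + b‖₂ ≤ cᵀx̄ + d) ≥ 1 - δ`, for every distribution of `x` with mean
`x̄` and covariance `Σ`. -/
theorem dr_conic_constraint_guarantee {Ω : Type*} [MeasurableSpace Ω]
    (P : Measure Ω) [IsProbabilityMeasure P]
    {n : ℕ} (x : Ω → Fin n → ℝ)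
    (hx : ∀ i, Measurable fun ω => x ω i)
    (hx2 : ∀ i, MemLp (fun ω => x ω i) 2 P)
    (xbar : Fin n → ℝ) (S : Matrix (Fin n) (Fin n) ℝ)
    (hmean : ∀ i, ∫ ω, x ω i ∂P = xbar i)
    (hcov : ∀ i j, ∫ ω, (x ω i - xbar i) * (x ω j - xbar j) ∂P = S i j)
    (A : Matrix (Fin n) (Fin n) ℝ) (b c : Fin n → ℝ) (d δ : ℝ)
    (hδ : δ ∈ Set.Ioc (0 : ℝ) 1)
    (f β ε1 ε2 : Fin n → ℝ)
    (hf : ∀ i, 0 ≤ f i) (hβ : ∀ i, 0 ≤ β i) (hβsum : ∑ i, β i = 1)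
    (hε1 : ∀ i, ε1 i ∈ Set.Ioo (0 : ℝ) 1) (hε2 : ∀ i, ε2 i ∈ Set.Ioo (0 : ℝ) 1)
    (hεsum : ∀ i, 2 - β i * δ ≤ ε1 i + ε2 i)
    (ha : ∑ i, f i ^ 2 ≤ (dotProduct c xbar + d) ^ 2)
    (ha' : 0 ≤ dotProduct c xbar + d)
    (hb : ∀ i, dotProduct (A i) xbar
        + drQ (ε1 i) * Real.sqrt (dotProduct (A i) (S.mulVec (A i))) ≤ f i - b i)
    (hc : ∀ i, -dotProduct (A i) xbar
        + drQ (ε2 i) * Real.sqrt (dotProduct (A i) (S.mulVec (A i))) ≤ f i + b i) :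
    ENNReal.ofReal (1 - δ)
      ≤ P {ω | euclNorm (A.mulVec (x ω) + b) ≤ dotProduct c xbar + d} := by
  classical
  set y : Fin n → Ω → ℝ := fun i ω => (∑ j, A i j * x ω j) + b i with hy_def
  set m : Fin n → ℝ := fun i => dotProduct (A i) xbar + b i with hm_def
  set v : Fin n → ℝ := fun i => dotProduct (A i) (S.mulVec (A i)) with hv_def
  -- L2 membership
  have hyL2 : ∀ i, MemLp (y i) 2 P := by
    intro i
    have hs : MemLp (fun ω => ∑ j, A i j * x ω j) 2 P :=
      memLp_finset_sum _ fun j _ => (hx2 j).const_mul (A i j)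
    exact hs.add (memLp_const (b i))
  -- measurability
  have hymeas : ∀ i, Measurable (y i) := by
    intro i
    exact (Finset.measurable_sum _ fun j _ => (hx j).const_mul (A i j)).add_const (b i)
  -- means
  have hymean : ∀ i, ∫ ω, y i ω ∂P = m i := by
    intro i
    have hint : ∀ j : Fin n, Integrable (fun ω => A i j * x ω j) P :=
      fun j => ((hx2 j).integrable one_le_two).const_mul (A i j)
    have hsint : Integrable (fun ω => ∑ j, A i j * x ω j) P :=
      integrable_finset_sum _ fun j _ => hint j
    rw [hy_def]
    simp only
    rw [integral_add hsint (integrable_const _), integral_finset_sum _ fun j _ => hint j,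
      integral_const]
    simp only [MeasureTheory.integral_const_mul, hmean, measure_univ, ENNReal.toReal_one, one_smul,
      smul_eq_mul]
    simp [hm_def, dotProduct]
  -- variances
  have hyvar : ∀ i, ∫ ω, (y i ω - m i) ^ 2 ∂P = v i := by
    intro i
    have hz2 : ∀ j : Fin n, MemLp (fun ω => x ω j - xbar j) 2 P :=
      fun j => (hx2 j).sub (memLp_const (xbar j))
    have hterm : ∀ j k : Fin n,
        Integrable (fun ω => (A i j * A i k) * ((x ω j - xbar j) * (x ω k - xbar k))) P :=
      fun j k => (memL2_mul_integrable (hz2 j) (hz2 k)).const_mul _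
    have e : ∀ ω, (y i ω - m i) ^ 2
        = ∑ j, ∑ k, (A i j * A i k) * ((x ω j - xbar j) * (x ω k - xbar k)) := by
      intro ω
      have e1 : y i ω - m i = ∑ j, A i j * (x ω j - xbar j) := by
        simp only [hy_def, hm_def, dotProduct, mul_sub, Finset.sum_sub_distrib]
        ring
      rw [e1, sq, Finset.sum_mul_sum]
      apply Finset.sum_congr rfl; intro j _
      apply Finset.sum_congr rfl; intro k _
      ring
    simp only [e]
    rw [integral_finset_sum _ fun j _ => integrable_finset_sum _ fun k _ => hterm j k]
    have : ∀ j : Fin n, ∫ ω, (∑ k, (A i j * A i k) * ((x ω j - xbar j) * (x ω k - xbar k))) ∂P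
        = ∑ k, (A i j * A i k) * S j k := by
      intro j
      rw [integral_finset_sum _ fun k _ => hterm j k]
      exact Finset.sum_congr rfl fun k _ => by
        rw [MeasureTheory.integral_const_mul, hcov]
    simp only [this, hv_def, dotProduct, Matrix.mulVec]
    apply Finset.sum_congr rfl; intro j _
    rw [Finset.mul_sum]
    exact Finset.sum_congr rfl fun k _ => by ring
  -- the two tail bounds
  have hb1 : ∀ i, P {ω | f i < y i ω} ≤ ENNReal.ofReal (1 - ε1 i) := by
    intro i
    refine cantelli_drQ P (hyL2 i) (hymean i) (hyvar i) (hε1 i) ?_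
    have := hb i
    simp only [hm_def, hv_def]
    linarith
  have hb2 : ∀ i, P {ω | f i < -(y i ω)} ≤ ENNReal.ofReal (1 - ε2 i) := by
    intro i
    have hneg : MemLp (fun ω => -(y i ω)) 2 P := (hyL2 i).neg
    have hmn : ∫ ω, -(y i ω) ∂P = -(m i) := by rw [integral_neg, hymean]
    have hvn : ∫ ω, (-(y i ω) - -(m i)) ^ 2 ∂P = v i := by
      rw [← hyvar i]
      congr 1; funext ω; ring
    refine cantelli_drQ P hneg hmn hvn (hε2 i) ?_
    have := hc i
    simp only [hm_def, hv_def]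
    linarith
  -- union bound
  set E : Fin n → Set Ω := fun i => {ω | f i < y i ω} ∪ {ω | f i < -(y i ω)} with hE_def
  have hEmeas : ∀ i, MeasurableSet (E i) :=
    fun i => (measurableSet_lt measurable_const (hymeas i)).union
      (measurableSet_lt measurable_const (hymeas i).neg)
  have hPE : ∀ i, P (E i) ≤ ENNReal.ofReal (β i * δ) := by
    intro i
    calc P (E i) ≤ P {ω | f i < y i ω} + P {ω | f i < -(y i ω)} := measure_union_le _ _
      _ ≤ ENNReal.ofReal (1 - ε1 i) + ENNReal.ofReal (1 - ε2 i) := add_le_add (hb1 i) (hb2 i)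
      _ = ENNReal.ofReal ((1 - ε1 i) + (1 - ε2 i)) := by
          rw [ENNReal.ofReal_add (by linarith [(hε1 i).2]) (by linarith [(hε2 i).2])]
      _ ≤ ENNReal.ofReal (β i * δ) := by
          apply ENNReal.ofReal_le_ofReal
          linarith [hεsum i]
  have hPB : P (⋃ i, E i) ≤ ENNReal.ofReal δ := by
    calc P (⋃ i, E i) ≤ ∑ i, P (E i) := measure_iUnion_fintype_le _ _
      _ ≤ ∑ i, ENNReal.ofReal (β i * δ) := Finset.sum_le_sum fun i _ => hPE i
      _ = ENNReal.ofReal (∑ i, β i * δ) := by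
          rw [ENNReal.ofReal_sum_of_nonneg fun i _ => mul_nonneg (hβ i) hδ.1.le]
      _ = ENNReal.ofReal δ := by rw [← Finset.sum_mul, hβsum, one_mul]
  -- complement inclusion
  have hsub : (⋃ i, E i)ᶜ ⊆
      {ω | euclNorm (A.mulVec (x ω) + b) ≤ dotProduct c xbar + d} := by
    intro ω hω
    simp only [Set.compl_iUnion, Set.mem_iInter, Set.mem_compl_iff, hE_def,
      Set.mem_union, Set.mem_setOf_eq, not_or, not_lt] at hω
    have habs : ∀ i, (y i ω) ^ 2 ≤ f i ^ 2 := by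
      intro i
      exact sq_le_sq' (by linarith [(hω i).2]) (hω i).1
    have heq : ∀ i, (A.mulVec (x ω) + b) i = y i ω := by
      intro i
      simp [Matrix.mulVec, dotProduct, hy_def]
    simp only [Set.mem_setOf_eq, euclNorm]
    calc Real.sqrt (∑ i, ((A.mulVec (x ω) + b) i) ^ 2)
        ≤ Real.sqrt ((dotProduct c xbar + d) ^ 2) := by
          apply Real.sqrt_le_sqrt
          calc ∑ i, ((A.mulVec (x ω) + b) i) ^ 2 = ∑ i, (y i ω) ^ 2 := by
                exact Finset.sum_congr rfl fun i _ => by rw [heq i]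
            _ ≤ ∑ i, f i ^ 2 := Finset.sum_le_sum fun i _ => habs i
            _ ≤ _ := ha
      _ = dotProduct c xbar + d := Real.sqrt_sq ha'
  -- conclude
  have hBmeas : MeasurableSet (⋃ i, E i) := MeasurableSet.iUnion fun i => hEmeas i
  calc ENNReal.ofReal (1 - δ) = 1 - ENNReal.ofReal δ := by
        rw [ENNReal.ofReal_sub _ hδ.1.le, ENNReal.ofReal_one]
    _ ≤ 1 - P (⋃ i, E i) := tsub_le_tsub_left hPB 1
    _ = P (⋃ i, E i)ᶜ := (prob_compl_eq_one_sub hBmeas).symm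
    _ ≤ P {ω | euclNorm (A.mulVec (x ω) + b) ≤ dotProduct c xbar + d} :=
        measure_mono hsub
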